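/- Let F be a graph without isolated vertices with v ≥ 2 vertices and minimum degree δ ≥ 2, and let γ := min_{1 ≤ i ≤ v−1} e_i / i. Then: (1) γ ≥ δ/2 − 1/(δ+1); (2) if δ is even and F is connected, or if F is 2-edge-connected, then γ ≥ δ/2; (3) if δ is odd and F is connected, then γ ≥ δ/2 − 1/(2(δ+2)). -/
import Mathlib


open SimpleGraph

/-- One step of `F`-bootstrap percolation: `G'` is obtained from `G` by adding a single
missing edge that lies in a copy of `F` in `G'`. -/
def BootStep {α β : Type*} (F : SimpleGraph α) (G G' : SimpleGraph β) : Prop :=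
  ∃ x y : β, x ≠ y ∧ ¬ G.Adj x y ∧ G' = G ⊔ SimpleGraph.fromEdgeSet {s(x, y)} ∧
    ∃ φ : F →g G', Function.Injective φ ∧ ∃ u w : α, F.Adj u w ∧ φ u = x ∧ φ w = y

/-- `H` is weakly `F`-saturated: some `F`-bootstrap percolation process leads from `H`
to the complete graph. -/
def WeaklySat {α β : Type*} (F : SimpleGraph α) (H : SimpleGraph β) : Prop :=
  Relation.ReflTransGen (BootStep F) H ⊤

/-- The weak saturation number: minimum number of edges of a weakly `F`-saturated
graph on `n` vertices. -/
noncomputable def wsat {α : Type*} (F : SimpleGraph α) (n : ℕ) : ℕ :=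
  sInf { m | ∃ H : SimpleGraph (Fin n), WeaklySat F H ∧ H.edgeSet.ncard = m }

/-- `eMin F i` : the minimum, over `i`-element vertex subsets `S`, of the number of edges of
`F` with at least one endpoint in `S`, minus 1 (and `0` for `i = 0`). -/
noncomputable def eMin {α : Type*} (F : SimpleGraph α) (i : ℕ) : ℕ :=
  if i = 0 then 0
  else sInf { m | ∃ S : Set α, S.ncard = i ∧ {e ∈ F.edgeSet | ∃ x ∈ S, x ∈ e}.ncard = m } - 1

/-- `gstar F r i` : minimum of `e_{i₁} + … + e_{i_s}` over all decompositions
`i = i₁ + … + i_s` with `1 ≤ i_j ≤ v - r`. -/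
noncomputable def gstar {α : Type*} [Fintype α] (F : SimpleGraph α) (r i : ℕ) : ℕ :=
  if i = 0 then 0
  else sInf { m | ∃ L : List ℕ, (∀ j ∈ L, 1 ≤ j ∧ j ≤ Fintype.card α - r) ∧
    L.sum = i ∧ (L.map (eMin F)).sum = m }

/-- The set `𝒦` of indices `i ∈ {1,…,v}` admitting no nontrivial decomposition
`i = i₁ + … + i_s` (`s ≥ 2`) with `e_i ≥ e_{i₁} + … + e_{i_s}`. -/
noncomputable def Kset {α : Type*} [Fintype α] (F : SimpleGraph α) : Set ℕ :=
  { i | 1 ≤ i ∧ i ≤ Fintype.card α ∧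
    ¬ ∃ L : List ℕ, 2 ≤ L.length ∧ (∀ j ∈ L, 1 ≤ j) ∧ L.sum = i ∧
      (L.map (eMin F)).sum ≤ eMin F i }

/-- `betaF F` : minimum number of vertices whose deletion leaves a graph with a cut-edge. -/
noncomputable def betaF {α : Type*} [Fintype α] (F : SimpleGraph α) : ℕ :=
  sInf { k | ∃ S : Set α, S.ncard = k ∧ ∃ e, (F.induce Sᶜ).IsBridge e }

/-- A graph is 2-edge-connected if it stays connected after deleting at most one edge. -/
def TwoEdgeConnected {α : Type*} (F : SimpleGraph α) : Prop :=
  ∀ s : Set (Sym2 α), s.ncard ≤ 1 → (F.deleteEdges s).Connected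


section aux
open Finset
variable {α : Type*} [Fintype α] [DecidableEq α]

variable {α : Type*} [Fintype α] [DecidableEq α]

section counting
variable (F : SimpleGraph α) [DecidableRel F.Adj]

lemma cnt_eq (T : Finset α) (e : Sym2 α) (he : e ∈ F.edgeFinset) :
    (T.filter (· ∈ e)).card =
      (if (∃ x ∈ T, x ∈ e) then 1 else 0) + (if (∀ x ∈ e, x ∈ T) then 1 else 0) := by
  induction e with
  | _ a b =>
    rw [SimpleGraph.mem_edgeFinset] at he
    have hab : a ≠ b := fun h => (F.not_isDiag_of_mem_edgeSet he) (by simp [h])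
    by_cases ha : a ∈ T <;> by_cases hb : b ∈ T
    · have h1 : (∃ x ∈ T, x ∈ s(a,b)) := ⟨a, ha, by simp⟩
      have h2 : (∀ x ∈ s(a,b), x ∈ T) := by
        intro x hx; rcases Sym2.mem_iff.1 hx with rfl | rfl <;> assumption
      have hT : T.filter (· ∈ s(a,b)) = {a, b} := by
        ext x
        simp only [Finset.mem_filter, Sym2.mem_iff, Finset.mem_insert, Finset.mem_singleton]
        constructor
        · rintro ⟨-, h⟩; exact h
        · rintro (rfl | rfl) <;> simp [ha, hb]
      rw [if_pos h1, if_pos h2, hT,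
        Finset.card_insert_of_notMem (by simp [hab]), Finset.card_singleton]
    · have h1 : (∃ x ∈ T, x ∈ s(a,b)) := ⟨a, ha, by simp⟩
      have h2 : ¬ (∀ x ∈ s(a,b), x ∈ T) := fun h => hb (h b (by simp))
      have hT : T.filter (· ∈ s(a,b)) = {a} := by
        ext x
        simp only [Finset.mem_filter, Sym2.mem_iff, Finset.mem_singleton]
        constructor
        · rintro ⟨hx, rfl | rfl⟩
          · rfl
          · exact absurd hx hb
        · rintro rfl; simp [ha]
      rw [if_pos h1, if_neg h2, hT, Finset.card_singleton]
    · have h1 : (∃ x ∈ T, x ∈ s(a,b)) := ⟨b, hb, by simp⟩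
      have h2 : ¬ (∀ x ∈ s(a,b), x ∈ T) := fun h => ha (h a (by simp))
      have hT : T.filter (· ∈ s(a,b)) = {b} := by
        ext x
        simp only [Finset.mem_filter, Sym2.mem_iff, Finset.mem_singleton]
        constructor
        · rintro ⟨hx, rfl | rfl⟩
          · exact absurd hx ha
          · rfl
        · rintro rfl; simp [hb]
      rw [if_pos h1, if_neg h2, hT, Finset.card_singleton]
    · have h1 : ¬ (∃ x ∈ T, x ∈ s(a,b)) := by
        rintro ⟨x, hx, hm⟩
        rcases Sym2.mem_iff.1 hm with rfl | rfl
        exacts [ha hx, hb hx]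
      have h2 : ¬ (∀ x ∈ s(a,b), x ∈ T) := fun h => ha (h a (by simp))
      have hT : T.filter (· ∈ s(a,b)) = ∅ := by
        ext x
        simp only [Finset.mem_filter, Sym2.mem_iff, Finset.notMem_empty, iff_false, not_and]
        rintro hx (rfl | rfl)
        exacts [ha hx, hb hx]
      rw [if_neg h1, if_neg h2, hT, Finset.card_empty]

lemma sum_deg_eq (T : Finset α) :
    ∑ x ∈ T, F.degree x =
      (F.edgeFinset.filter (fun e => ∃ x ∈ T, x ∈ e)).card +
      (F.edgeFinset.filter (fun e => ∀ x ∈ e, x ∈ T)).card := by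
  have h1 : ∀ x ∈ T, F.degree x = (F.edgeFinset.filter (fun e => x ∈ e)).card := by
    intro x _
    rw [← card_incidenceFinset_eq_degree, incidenceFinset_eq_filter]
  rw [Finset.sum_congr rfl h1]
  have h2 : ∀ x, (F.edgeFinset.filter (fun e => x ∈ e)).card =
      ∑ e ∈ F.edgeFinset, if x ∈ e then 1 else 0 := by
    intro x; rw [Finset.card_filter]
  simp_rw [h2]
  rw [Finset.sum_comm]
  have h3 : ∀ e ∈ F.edgeFinset, (∑ x ∈ T, if x ∈ e then 1 else 0) =
      (if (∃ x ∈ T, x ∈ e) then 1 else 0) + (if (∀ x ∈ e, x ∈ T) then 1 else 0) := by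
    intro e he
    rw [← Finset.card_filter]
    exact cnt_eq F T e he
  rw [Finset.sum_congr rfl h3, Finset.sum_add_distrib, ← Finset.card_filter, ← Finset.card_filter]

lemma inside_card_le (T : Finset α) :
    (F.edgeFinset.filter (fun e => ∀ x ∈ e, x ∈ T)).card ≤ T.card.choose 2 := by
  set I := F.edgeFinset.filter (fun e => ∀ x ∈ e, x ∈ T) with hI
  have hsub : I ∪ T.image Sym2.diag ⊆ T.sym2 := by
    intro e he
    rcases Finset.mem_union.1 he with h | h
    · rw [Finset.mem_filter] at h
      exact Finset.mem_sym2_iff.2 h.2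
    · rcases Finset.mem_image.1 h with ⟨a, ha, rfl⟩
      exact Finset.mem_sym2_iff.2 (by simp [ha])
  have hdisj : Disjoint I (T.image Sym2.diag) := by
    rw [Finset.disjoint_left]
    intro e he hd
    rcases Finset.mem_image.1 hd with ⟨a, _, rfl⟩
    exact F.not_isDiag_of_mem_edgeSet (SimpleGraph.mem_edgeFinset.1 (Finset.mem_filter.1 he).1)
      (Sym2.diag_isDiag a)
  have hcards : I.card + (T.image Sym2.diag).card ≤ (T.sym2).card := by
    rw [← Finset.card_union_of_disjoint hdisj]
    exact Finset.card_le_card hsub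
  have himg : (T.image Sym2.diag).card = T.card :=
    Finset.card_image_of_injective _ Sym2.diag_injective
  rw [himg, Finset.card_sym2] at hcards
  have : (T.card + 1).choose 2 = T.card.choose 2 + T.card := by
    rw [Nat.choose_succ_succ]
    simp [Nat.add_comm]
  omega

lemma split_card (T : Finset α) :
    (F.edgeFinset.filter (fun e => ∃ x ∈ T, x ∈ e)).card =
      (F.edgeFinset.filter (fun e => ∀ x ∈ e, x ∈ T)).card +
      (F.edgeFinset.filter (fun e => (∃ x ∈ T, x ∈ e) ∧ ¬∀ x ∈ e, x ∈ T)).card := by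
  rw [Finset.card_filter, Finset.card_filter, Finset.card_filter, ← Finset.sum_add_distrib]
  apply Finset.sum_congr rfl
  intro e _
  have hex : (∀ x ∈ e, x ∈ T) → (∃ x ∈ T, x ∈ e) :=
    fun h => ⟨e.out.1, h _ (Sym2.out_fst_mem e), Sym2.out_fst_mem e⟩
  by_cases h1 : ∀ x ∈ e, x ∈ T
  · rw [if_pos (hex h1), if_pos h1, if_neg (fun hc => hc.2 h1)]
  · by_cases h2 : ∃ x ∈ T, x ∈ e
    · rw [if_pos h2, if_neg h1, if_pos ⟨h2, h1⟩]
    · rw [if_neg h2, if_neg h1, if_neg (fun hc => h2 hc.1)]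

end counting

lemma exists_cross (F : SimpleGraph α) (hconn : F.Connected) {T : Finset α}
    (hT : T.Nonempty) (hT' : ∃ b, b ∉ T) :
    ∃ e ∈ F.edgeSet, (∃ x ∈ T, x ∈ e) ∧ ¬∀ x ∈ e, x ∈ T := by
  obtain ⟨a, ha⟩ := hT
  obtain ⟨b, hb⟩ := hT'
  obtain ⟨p⟩ := hconn.preconnected a b
  obtain ⟨d, _, hd1, hd2⟩ := p.exists_boundary_dart {x | x ∈ T} ha hb
  obtain ⟨⟨x, y⟩, hadj⟩ := d
  exact ⟨s(x, y), hadj, ⟨x, hd1, by simp⟩, fun h => hd2 (h y (by simp))⟩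

lemma exists_two_cross (F : SimpleGraph α) (h2ec : TwoEdgeConnected F) {T : Finset α}
    (hT : T.Nonempty) (hT' : ∃ b, b ∉ T) :
    ∃ e₁ ∈ F.edgeSet, ∃ e₂ ∈ F.edgeSet, e₁ ≠ e₂ ∧
      ((∃ x ∈ T, x ∈ e₁) ∧ ¬∀ x ∈ e₁, x ∈ T) ∧ ((∃ x ∈ T, x ∈ e₂) ∧ ¬∀ x ∈ e₂, x ∈ T) := by
  have hc1 : F.Connected := by
    have := h2ec ∅ (by simp)
    rwa [SimpleGraph.deleteEdges_empty] at this
  obtain ⟨e₁, he₁, hc₁⟩ := exists_cross F hc1 hT hT'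
  have hc2 : (F.deleteEdges {e₁}).Connected := h2ec {e₁} (by simp)
  obtain ⟨e₂, he₂, hc₂⟩ := exists_cross (F.deleteEdges {e₁}) hc2 hT hT'
  rw [SimpleGraph.edgeSet_deleteEdges] at he₂
  exact ⟨e₂, he₂.1, e₁, he₁, fun h => he₂.2 (by simp [h]), hc₂, hc₁⟩

lemma eMin_key (F : SimpleGraph α) [DecidableRel F.Adj] (δ : ℕ) (hδ : 1 ≤ δ)
    (hmindeg : ∀ x : α, δ ≤ (F.neighborSet x).ncard)
    (i : ℕ) (h1 : 1 ≤ i) (h2 : i ≤ Fintype.card α) :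
    δ * i ≤ 2 * (eMin F i + 1) ∧ δ * i ≤ eMin F i + 1 + i.choose 2 ∧
  (F.Connected → i ≤ Fintype.card α - 1 → δ * i + 1 ≤ 2 * (eMin F i + 1)) ∧
  (TwoEdgeConnected F → i ≤ Fintype.card α - 1 → δ * i + 2 ≤ 2 * (eMin F i + 1)) := by
  set M := { m | ∃ S : Set α, S.ncard = i ∧ {e ∈ F.edgeSet | ∃ x ∈ S, x ∈ e}.ncard = m } with hM
  have hne : M.Nonempty := by
    obtain ⟨S, -, hS⟩ := Set.exists_subset_card_eq (s := (Set.univ : Set α)) (n := i)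
      (by rw [Set.ncard_univ, Nat.card_eq_fintype_card]; exact h2)
    exact ⟨_, S, hS, rfl⟩
  have hmem : sInf M ∈ M := Nat.sInf_mem hne
  obtain ⟨S, hScard, hSval⟩ := hmem
  have hSfin : S.Finite := Set.toFinite S
  set T := hSfin.toFinset with hTdef
  have hTcard : T.card = i := by
    rw [hTdef, ← Set.ncard_eq_toFinset_card, hScard]
  set E := F.edgeFinset.filter (fun e => ∃ x ∈ T, x ∈ e) with hEdef
  set I := F.edgeFinset.filter (fun e => ∀ x ∈ e, x ∈ T) with hIdef
  set C := F.edgeFinset.filter (fun e => (∃ x ∈ T, x ∈ e) ∧ ¬∀ x ∈ e, x ∈ T) with hCdef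
  have hE : E.card = sInf M := by
    rw [← hSval, ← Set.ncard_coe_finset]
    congr 1
    ext e
    simp [hEdef, hTdef, Set.Finite.mem_toFinset]
  have hsum : ∑ x ∈ T, F.degree x = E.card + I.card := sum_deg_eq F T
  have hdeg : δ * i ≤ ∑ x ∈ T, F.degree x := by
    have hx : ∀ x ∈ T, δ ≤ F.degree x := by
      intro x _
      have := hmindeg x
      rwa [Set.ncard_eq_toFinset_card', ← neighborFinset_def] at this
    calc δ * i = T.card • δ := by rw [smul_eq_mul, hTcard, mul_comm]
    _ ≤ ∑ x ∈ T, F.degree x := Finset.card_nsmul_le_sum T _ δ hx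
  have hIE : I ⊆ E := by
    intro e he
    rw [Finset.mem_filter] at he ⊢
    obtain ⟨x, hx⟩ : ∃ x, x ∈ e := ⟨e.out.1, Sym2.out_fst_mem e⟩
    exact ⟨he.1, x, he.2 x hx, hx⟩
  have hIcard : I.card ≤ i.choose 2 := hTcard ▸ inside_card_le F T
  have hIEc : I.card ≤ E.card := Finset.card_le_card hIE
  have hmul : 1 ≤ δ * i := Nat.mul_pos hδ h1
  have hm1 : 1 ≤ sInf M := by omega
  have heMin : eMin F i + 1 = sInf M := by
    rw [eMin, if_neg (by omega : ¬ i = 0), ← hM]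
    omega
  have hsplit : E.card = I.card + C.card := split_card F T
  have hTne : T.Nonempty := Finset.card_pos.1 (by omega)
  have hTproper : i ≤ Fintype.card α - 1 → ∃ b, b ∉ T := by
    intro hi
    by_contra h
    push_neg at h
    have : T = Finset.univ := Finset.eq_univ_iff_forall.2 h
    rw [this, Finset.card_univ] at hTcard
    omega
  refine ⟨by omega, by omega, ?_, ?_⟩
  · intro hconn hi
    obtain ⟨e, he, hc1, hc2⟩ := exists_cross F hconn hTne (hTproper hi)
    have hmC : e ∈ C := Finset.mem_filter.2 ⟨SimpleGraph.mem_edgeFinset.2 he, hc1, hc2⟩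
    have hCc : 1 ≤ C.card := Finset.card_pos.2 ⟨e, hmC⟩
    omega
  · intro h2ec hi
    obtain ⟨e₁, he₁, e₂, he₂, hne12, hcr1, hcr2⟩ := exists_two_cross F h2ec hTne (hTproper hi)
    have hm1' : e₁ ∈ C := Finset.mem_filter.2 ⟨SimpleGraph.mem_edgeFinset.2 he₁, hcr1⟩
    have hm2' : e₂ ∈ C := Finset.mem_filter.2 ⟨SimpleGraph.mem_edgeFinset.2 he₂, hcr2⟩
    have hCc : 1 < C.card := Finset.one_lt_card.2 ⟨e₁, hm1', e₂, hm2', hne12⟩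
    omega

end aux

lemma two_mul_choose_two (n : ℕ) : 2 * n.choose 2 = n * (n - 1) := by
  have h : 2 ∣ n * (n - 1) := by
    rcases Nat.even_or_odd n with h | h
    · exact Dvd.dvd.mul_right h.two_dvd _
    · cases n with
      | zero => simp
      | succ m =>
        have hm : Even m := by rcases h with ⟨k, hk⟩; exact ⟨k, by omega⟩
        simpa [Nat.succ_sub_one] using Dvd.dvd.mul_left hm.two_dvd (m + 1)
  rw [Nat.choose_two_right, Nat.mul_div_cancel' h]



/-- For a graph `F` without isolated vertices with `v ≥ 2` vertices and
minimum degree `δ ≥ 2`, let `γ := min_{1 ≤ i ≤ v−1} e_i / i`. Then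
(1) `γ ≥ δ/2 − 1/(δ+1)`;
(2) if `δ` even and `F` connected, or `F` 2-edge-connected, then `γ ≥ δ/2`;
(3) if `δ` odd and `F` connected, then `γ ≥ δ/2 − 1/(2(δ+2))`. -/
theorem gamma_lower_bounds {α : Type*} [Fintype α] (F : SimpleGraph α)
    (v δ : ℕ) (hv : v = Fintype.card α) (hv2 : 2 ≤ v)
    (hiso : ∀ x : α, ∃ y, F.Adj x y)
    (hδ2 : 2 ≤ δ)
    (hmindeg : ∀ x : α, δ ≤ (F.neighborSet x).ncard)
    (hmineq : ∃ x : α, (F.neighborSet x).ncard = δ)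
    (γ : ℝ)
    (hγ : IsLeast {x : ℝ | ∃ i : ℕ, 1 ≤ i ∧ i ≤ v - 1 ∧ x = (eMin F i : ℝ) / (i : ℝ)} γ) :
    ((δ : ℝ) / 2 - 1 / ((δ : ℝ) + 1) ≤ γ) ∧
    (((Even δ ∧ F.Connected) ∨ TwoEdgeConnected F) → (δ : ℝ) / 2 ≤ γ) ∧
    ((Odd δ ∧ F.Connected) → (δ : ℝ) / 2 - 1 / (2 * ((δ : ℝ) + 2)) ≤ γ) := by
  classical
  obtain ⟨⟨i, hi1, hi2, hγeq⟩, -⟩ := hγ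
  subst hγeq
  rw [hv] at hi2 hv2
  have hicard : i ≤ Fintype.card α - 1 := hi2
  have hile : i ≤ Fintype.card α := by omega
  haveI : DecidableRel F.Adj := Classical.decRel _
  obtain ⟨K1, K2, K3, K4⟩ := eMin_key F δ (by omega) hmindeg i hi1 hile
  set A := eMin F i with hA
  have hI0 : (0 : ℝ) < (i : ℝ) := by exact_mod_cast hi1
  have hD2 : (2 : ℝ) ≤ (δ : ℝ) := by exact_mod_cast hδ2
  have hR1 : (δ : ℝ) * i ≤ 2 * (A : ℝ) + 2 := by exact_mod_cast K1
  have hchoose : 2 * (δ * i) ≤ 2 * A + 2 + i * (i - 1) := by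
    have h := two_mul_choose_two i; omega
  have hR2 : 2 * ((δ : ℝ) * i) ≤ 2 * (A : ℝ) + 2 + (i : ℝ) * ((i : ℝ) - 1) := by
    have h := (Nat.cast_le (α := ℝ)).2 hchoose
    push_cast [Nat.cast_sub hi1] at h
    linarith
  -- helper: small i ⇒ δ/2 ≤ A/i
  have hsmall : i ≤ δ → (δ : ℝ) / 2 ≤ (A : ℝ) / (i : ℝ) := by
    intro hid
    have hidR : (i : ℝ) ≤ (δ : ℝ) := by exact_mod_cast hid
    rw [div_le_div_iff₀ two_pos hI0]
    rcases eq_or_lt_of_le hi1 with h1 | h1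
    · -- i = 1
      have hc : (1 : ℕ).choose 2 = 0 := by decide
      rw [← h1] at K2 ⊢
      rw [hc] at K2
      have hK2' : δ ≤ A + 1 := by omega
      have hAD : (δ : ℝ) ≤ (A : ℝ) + 1 := by exact_mod_cast hK2'
      push_cast
      linarith
    · have hI2 : (2 : ℝ) ≤ (i : ℝ) := by exact_mod_cast h1
      nlinarith [mul_nonneg (le_of_lt hI0) (sub_nonneg.2 hidR)]
  refine ⟨?_, ?_, ?_⟩
  · -- Part 1
    rcases le_or_gt i δ with hid | hid
    · have h := hsmall hid
      have hpos : (0 : ℝ) < (δ : ℝ) + 1 := by linarith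
      have : (1 : ℝ) / ((δ : ℝ) + 1) > 0 := by positivity
      linarith
    · have hiD : (δ : ℝ) + 1 ≤ (i : ℝ) := by exact_mod_cast hid
      have hpos : (0 : ℝ) < (δ : ℝ) + 1 := by linarith
      rw [div_sub_div _ _ two_ne_zero (ne_of_gt hpos), div_le_div_iff₀ (by positivity) hI0]
      nlinarith [mul_le_mul_of_nonneg_left hR1 (le_of_lt hpos)]
  · -- Part 2
    rintro (⟨heven, hconn⟩ | h2ec)
    · obtain ⟨k, hk⟩ := heven
      have hkk : δ * i = 2 * (k * i) := by rw [hk]; ring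
      have hK := K3 hconn hicard
      have hnat : δ * i ≤ 2 * A := by omega
      have : (δ : ℝ) * i ≤ 2 * (A : ℝ) := by exact_mod_cast hnat
      rw [div_le_div_iff₀ two_pos hI0]
      linarith
    · have hK := K4 h2ec hicard
      have hnat : δ * i ≤ 2 * A := by omega
      have : (δ : ℝ) * i ≤ 2 * (A : ℝ) := by exact_mod_cast hnat
      rw [div_le_div_iff₀ two_pos hI0]
      linarith
  · -- Part 3
    rintro ⟨hodd, hconn⟩
    obtain ⟨a, ha⟩ := hodd
    have hK := K3 hconn hicard
    have hposd : (0 : ℝ) < 2 * ((δ : ℝ) + 2) := by linarith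
    have hfrac : (0 : ℝ) < 1 / (2 * ((δ : ℝ) + 2)) := by positivity
    rcases Nat.even_or_odd i with hie | hio
    · obtain ⟨b, hb⟩ := hie
      have hbb : δ * i = 2 * (δ * b) := by rw [hb]; ring
      have hnat : δ * i ≤ 2 * A := by omega
      have hRR : (δ : ℝ) * i ≤ 2 * (A : ℝ) := by exact_mod_cast hnat
      have : (δ : ℝ) / 2 ≤ (A : ℝ) / i := by
        rw [div_le_div_iff₀ two_pos hI0]; linarith
      linarith
    · obtain ⟨b, hb⟩ := hio
      rcases le_or_gt i δ with hid | hid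
      · have := hsmall hid; linarith
      · have hid2 : δ + 2 ≤ i := by omega
        have hiD2 : (δ : ℝ) + 2 ≤ (i : ℝ) := by exact_mod_cast hid2
        have hR3 : (δ : ℝ) * i + 1 ≤ 2 * (A : ℝ) + 2 := by exact_mod_cast hK
        rw [div_sub_div _ _ two_ne_zero (ne_of_gt hposd), div_le_div_iff₀ (by positivity) hI0]
        nlinarith [mul_le_mul_of_nonneg_left hR3 (le_of_lt hposd)]
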